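/- arXiv:1412.0511 — 3 statements merged into one kernel-verified Lean document; each statement's English description precedes it below -/
import Mathlib

section
/- With z_n as above and ε ∉ {0, 1, −1}, the eigenvalues of z_n are exactly {1, −1, 0, ..., 0} (with 0 of multiplicity n−2) if and only if |a₁|² = |a₂|² = (1−ε²)/2 and a₃ = ... = a_{n−1} = 0. -/
open Matrix Finset in
lemma det_arrow_aux {k : ℕ} (d : Fin k → ℂ) (hd : ∀ i, d i ≠ 0) (v w : Fin k → ℂ)
    (c : ℂ) (hc : c ≠ 0) :
    (Matrix.fromBlocks (Matrix.diagonal d) (Matrix.replicateCol (Fin 1) v) (Matrix.replicateRow (Fin 1) w)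
      (Matrix.diagonal (fun _ => c))).det
      = (∏ i, d i) * (c - ∑ i, v i * w i / d i) := by
  have hdet : IsUnit (Matrix.diagonal (fun _ : Fin 1 => c)).det := by
    simp [Matrix.det_diagonal, hc]
  haveI : Invertible (Matrix.diagonal (fun _ : Fin 1 => c)) :=
    Matrix.invertibleOfIsUnitDet _ hdet
  rw [Matrix.det_fromBlocks₂₂]
  have hinv : (⅟ (Matrix.diagonal (fun _ : Fin 1 => c)) : Matrix (Fin 1) (Fin 1) ℂ)
      = Matrix.diagonal (fun _ => c⁻¹) := by
    apply invOf_eq_right_inv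
    rw [Matrix.diagonal_mul_diagonal]
    simp [mul_inv_cancel₀ hc]
  have key : Matrix.diagonal d - Matrix.replicateCol (Fin 1) v * ⅟ (Matrix.diagonal (fun _ : Fin 1 => c))
        * Matrix.replicateRow (Fin 1) w
      = Matrix.diagonal d *
        (1 + Matrix.replicateCol (Fin 1) (fun i => -(v i / d i / c)) * Matrix.replicateRow (Fin 1) w) := by
    rw [hinv]
    ext i j
    rw [Matrix.diagonal_mul]
    simp only [Matrix.sub_apply, Matrix.mul_apply, Matrix.replicateCol_apply, Matrix.replicateRow_apply,
      Matrix.diagonal_apply, Matrix.add_apply, Matrix.one_apply, Fin.sum_univ_one]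
    by_cases h : i = j
    · subst h
      rw [if_pos rfl, if_pos rfl]
      rw [if_pos trivial]
      field_simp [hd i]
      ring
    · rw [if_neg h, if_neg h]
      rw [if_pos trivial]
      field_simp [hd i]
      ring
  rw [key, Matrix.det_mul]
  erw [Matrix.det_one_add_replicateCol_mul_replicateRow (ι := Fin 1)]
  rw [Matrix.det_diagonal,
    Matrix.det_diagonal]
  simp only [Finset.prod_const, Finset.card_univ, Fintype.card_fin, pow_one, dotProduct]
  have hsum : c * (1 + ∑ x, w x * -(v x / d x / c)) = c - ∑ i, v i * w i / d i := by
    rw [mul_add, mul_one, Finset.mul_sum, sub_eq_add_neg, ← Finset.sum_neg_distrib]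
    congr 1
    refine Finset.sum_congr rfl fun x _ => ?_
    field_simp [hd x]
  rw [← hsum]
  ring

open Finset in
lemma det_z (k : ℕ) (hk : 3 ≤ k) (ε : ℝ) (a : ℕ → ℂ)
    (z : Matrix (Fin (k+1)) (Fin (k+1)) ℂ)
    (hz : ∀ i j : Fin (k+1), z i j =
      if i = j then (if i.val = 0 then (ε : ℂ) else if i.val = 1 then -(ε : ℂ) else 0)
      else if j.val = k then a (i.val + 1)
      else if i.val = k then (starRingEnd ℂ) (a (j.val + 1))
      else 0)
    (lam : ℂ) (h0 : lam ≠ 0) (h1 : (ε:ℂ) - lam ≠ 0) (h2 : -(ε:ℂ) - lam ≠ 0) :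
    (z - lam • 1).det =
      (((ε:ℂ) - lam) * (-(ε:ℂ) - lam) * (-lam) ^ (k - 2)) *
        (-lam - (a 1 * (starRingEnd ℂ) (a 1) / ((ε:ℂ) - lam)
          + a 2 * (starRingEnd ℂ) (a 2) / (-(ε:ℂ) - lam)
          + (∑ i ∈ Finset.Ico 2 k, a (i+1) * (starRingEnd ℂ) (a (i+1))) / (-lam))) := by
  set g : ℕ → ℂ := fun i => (if i = 0 then (ε:ℂ) else if i = 1 then -(ε:ℂ) else 0) - lam with hg_def
  set d : Fin k → ℂ := fun i => g i.val with hd_def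
  have hd : ∀ i, d i ≠ 0 := by
    intro i
    simp only [hd_def, hg_def]
    split_ifs with hi0 hi1
    · exact h1
    · exact h2
    · simpa using h0
  set v : Fin k → ℂ := fun i => a (i.val + 1) with hv_def
  set w : Fin k → ℂ := fun i => (starRingEnd ℂ) (a (i.val + 1)) with hw_def
  have hM : ((z - lam • 1).submatrix finSumFinEquiv finSumFinEquiv : Matrix (Fin k ⊕ Fin 1) (Fin k ⊕ Fin 1) ℂ)
      = Matrix.fromBlocks (Matrix.diagonal d) (Matrix.replicateCol (Fin 1) v) (Matrix.replicateRow (Fin 1) w)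
        (Matrix.diagonal fun _ => -lam) := by
    ext i j
    rcases i with i | i <;> rcases j with j | j
    · -- both in Fin k
      by_cases h : i = j
      · subst h
        simp [hz, Matrix.one_apply, d, g, Fin.ext_iff]
      · have h' : (Fin.castAdd 1 i : Fin (k+1)) ≠ Fin.castAdd 1 j := by
          simpa [Fin.ext_iff] using (fun hh => h (Fin.ext hh))
        simp [hz, Matrix.one_apply, Matrix.diagonal_apply, h, h', Fin.ext_iff,
          Nat.ne_of_lt j.isLt, Nat.ne_of_lt i.isLt]
    · -- i in Fin k, j the corner
      have hj : j = 0 := Subsingleton.elim j 0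
      subst hj
      have hij : (Fin.castAdd 1 i : Fin (k+1)) ≠ Fin.natAdd k 0 := by
        simp [Fin.ext_iff]; omega
      simp [hz, Matrix.one_apply, hij, v]
    · have hij : (Fin.natAdd k i : Fin (k+1)) ≠ Fin.castAdd 1 j := by
        simp [Fin.ext_iff]; omega
      simp [hz, Matrix.one_apply, hij, w, Nat.ne_of_lt j.isLt]
    · have h1' : i = 0 := Subsingleton.elim i 0
      have h2' : j = 0 := Subsingleton.elim j 0
      subst h1'; subst h2'
      simp [hz, Matrix.one_apply, Matrix.diagonal_apply, Fin.ext_iff,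
        (by omega : ¬ (k = 0)), (by omega : ¬ (k = 1))]
      rw [if_neg (by omega), if_neg (by omega)]
  have harrow := det_arrow_aux d hd v w (-lam) (neg_ne_zero.2 h0)
  rw [← Matrix.det_submatrix_equiv_self finSumFinEquiv, hM, harrow]
  have hprod : (∏ i, d i) = ((ε:ℂ)-lam)*(-(ε:ℂ)-lam)*(-lam)^(k-2) := by
    rw [hd_def, Fin.prod_univ_eq_prod_range g k, Finset.range_eq_Ico,
      Finset.prod_eq_prod_Ico_succ_bot (by omega : 0 < k),
      Finset.prod_eq_prod_Ico_succ_bot (by omega : 1 < k)]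
    have hrest : ∏ i ∈ Finset.Ico 2 k, g i = (-lam)^(k-2) := by
      rw [Finset.prod_congr rfl (fun i hi => ?_), Finset.prod_const, Nat.card_Ico]
      rw [Finset.mem_Ico] at hi
      simp only [hg_def]
      rw [if_neg (by omega), if_neg (by omega), zero_sub]
    rw [hrest]
    simp only [hg_def]
    norm_num
    ring
  have hsum : (∑ i, v i * w i / d i) =
      a 1 * (starRingEnd ℂ) (a 1) / ((ε:ℂ) - lam)
        + a 2 * (starRingEnd ℂ) (a 2) / (-(ε:ℂ) - lam)
        + (∑ i ∈ Finset.Ico 2 k, a (i+1) * (starRingEnd ℂ) (a (i+1))) / (-lam) := by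
    rw [show (∑ i, v i * w i / d i)
        = ∑ i ∈ Finset.range k, (a (i+1) * (starRingEnd ℂ) (a (i+1)) / g i) from
      Fin.sum_univ_eq_sum_range (fun i => a (i+1) * (starRingEnd ℂ) (a (i+1)) / g i) k,
      Finset.range_eq_Ico,
      Finset.sum_eq_sum_Ico_succ_bot (by omega : 0 < k),
      Finset.sum_eq_sum_Ico_succ_bot (by omega : 1 < k)]
    have hrest : ∑ i ∈ Finset.Ico (1+1) k, (a (i+1) * (starRingEnd ℂ) (a (i+1)) / g i)
        = (∑ i ∈ Finset.Ico 2 k, a (i+1) * (starRingEnd ℂ) (a (i+1))) / (-lam) := by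
      rw [Finset.sum_div]
      refine Finset.sum_congr (by norm_num) fun i hi => ?_
      rw [Finset.mem_Ico] at hi
      simp only [hg_def]
      rw [if_neg (by omega), if_neg (by omega), zero_sub]
    rw [hrest]
    simp only [hg_def]
    norm_num
    ring
  rw [hprod, hsum]


lemma sub_ne_zero_of_im (c x : ℂ) (h : c.im ≠ x.im) : c - x ≠ 0 := by
  intro hh
  rw [sub_eq_zero] at hh
  exact h (by rw [hh])




/-- For the matrix `z_n` (as in the arrow-matrix computation) with `ε ∉ {0, 1, -1}`, the
eigenvalues of `z_n` are exactly `{1, -1, 0, ..., 0}` (i.e. the characteristic polynomial is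
`(-1)^n (λ-1)(λ+1)λ^{n-2}`) if and only if `|a₁|² = |a₂|² = (1-ε²)/2` and
`a₃ = ⋯ = a_{n-1} = 0`. -/
theorem arrow_matrix_eigenvalues_iff
    (n : ℕ) (hn : 4 ≤ n) (ε : ℝ) (hε0 : ε ≠ 0) (hε1 : ε ≠ 1) (hε1' : ε ≠ -1)
    (a : ℕ → ℂ)
    (z : Matrix (Fin n) (Fin n) ℂ)
    (hz : z = fun i j =>
      if i = j then (if i.val = 0 then (ε : ℂ) else if i.val = 1 then -(ε : ℂ) else 0)
      else if j.val = n - 1 then a (i.val + 1)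
      else if i.val = n - 1 then (starRingEnd ℂ) (a (j.val + 1))
      else 0) :
    (∀ lam : ℂ,
        (z - lam • (1 : Matrix (Fin n) (Fin n) ℂ)).det =
          (-1) ^ n * ((lam - 1) * (lam + 1) * lam ^ (n - 2)))
      ↔ (‖a 1‖ ^ 2 = (1 - ε ^ 2) / 2 ∧
          ‖a 2‖ ^ 2 = (1 - ε ^ 2) / 2 ∧
          ∀ i : ℕ, 3 ≤ i → i ≤ n - 1 → a i = 0) := by
  obtain ⟨k, rfl⟩ : ∃ k, n = k + 1 := ⟨n - 1, by omega⟩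
  have hk : 3 ≤ k := by omega
  have hz' : ∀ i j : Fin (k+1), z i j =
      if i = j then (if i.val = 0 then (ε : ℂ) else if i.val = 1 then -(ε : ℂ) else 0)
      else if j.val = k then a (i.val + 1)
      else if i.val = k then (starRingEnd ℂ) (a (j.val + 1))
      else 0 := by
    intro i j
    rw [hz]
    simp only [Nat.add_sub_cancel]
  have hn2 : k + 1 - 2 = k - 1 := by omega
  set A := a 1 * (starRingEnd ℂ) (a 1) with hA_def
  set B := a 2 * (starRingEnd ℂ) (a 2) with hB_def
  set S := ∑ i ∈ Finset.Ico 2 k, a (i+1) * (starRingEnd ℂ) (a (i+1)) with hS_def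
  have hεC : (ε:ℂ) ≠ 0 := Complex.ofReal_ne_zero.2 hε0
  constructor
  · intro H
    have ggen : ∀ lam : ℂ, lam ≠ 0 → (ε:ℂ) - lam ≠ 0 → -(ε:ℂ) - lam ≠ 0 →
        A*((ε:ℂ)*lam + lam^2) + B*(lam^2 - (ε:ℂ)*lam) + S*(lam^2 - (ε:ℂ)^2)
          = lam^2 - (ε:ℂ)^2*lam^2 := by
      intro lam h0 hd1 hd2
      have h := H lam
      rw [det_z k hk ε a z hz' lam h0 hd1 hd2, hn2] at h
      have e1 : ((-1:ℂ))^(k+1) = (-1)^(k-2) * (-1)^3 := by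
        rw [← pow_add]; congr 1; omega
      have e2 : lam^(k-1) = lam^(k-2) * lam := by
        rw [← pow_succ]; congr 1; omega
      have e3 : (-lam)^(k-2) = (-1:ℂ)^(k-2) * lam^(k-2) := by
        rw [neg_pow]
      rw [e1, e2, e3] at h
      have hc0 : ((-1:ℂ))^(k-2) * lam^(k-2) ≠ 0 :=
        mul_ne_zero (pow_ne_zero _ (by norm_num)) (pow_ne_zero _ h0)
      have h' : ((ε:ℂ) - lam) * (-(ε:ℂ) - lam) *
            (-lam - (A / ((ε:ℂ) - lam) + B / (-(ε:ℂ) - lam) + S / (-lam)))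
          = (-1)^3 * ((lam - 1) * (lam + 1) * lam) :=
        mul_left_cancel₀ hc0 (by linear_combination h)
      simp only [div_neg] at h'
      field_simp at h'
      have h'' : (-(lam * (((ε:ℂ) - lam) * (-(ε:ℂ) - lam) * lam)) -
            ((A * (-(ε:ℂ) - lam) + B * ((ε:ℂ) - lam)) * lam + -(S * (((ε:ℂ) - lam) * (-(ε:ℂ) - lam)))))
          = (-1)^3 * ((lam - 1) * (lam + 1) * lam) * lam :=
        by linear_combination h'
      linear_combination h''
    have g1 := ggen Complex.I Complex.I_ne_zero
      (sub_ne_zero_of_im _ _ (by simp)) (sub_ne_zero_of_im _ _ (by simp))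
    have g2 := ggen (-Complex.I) (by simp)
      (sub_ne_zero_of_im _ _ (by simp)) (sub_ne_zero_of_im _ _ (by simp))
    have g3 := ggen (2*Complex.I) (by simp)
      (sub_ne_zero_of_im _ _ (by simp)) (sub_ne_zero_of_im _ _ (by simp))
    have hQ : (2*(ε:ℂ)*Complex.I) * (A - B) = 0 := by linear_combination g1 - g2
    have hAB : A = B := by
      rcases mul_eq_zero.mp hQ with h | h
      · exact absurd h (by simp [hεC, Complex.I_ne_zero])
      · exact sub_eq_zero.mp h
    have hS3 : (3*(ε:ℂ)^2) * S = 0 := by linear_combination (-3)*g1 - g2 + g3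
    have hS0 : S = 0 := by
      rcases mul_eq_zero.mp hS3 with h | h
      · exact absurd h (by simp [hεC])
      · exact h
    rw [← hAB, hS0] at g1
    rw [Complex.I_sq] at g1
    have hA : A = ((1:ℂ) - (ε:ℂ)^2)/2 := by linear_combination (-1/2 : ℂ) * g1
    have hB : B = ((1:ℂ) - (ε:ℂ)^2)/2 := hAB.symm.trans hA
    refine ⟨?_, ?_, ?_⟩
    · have hcast : ((‖a 1‖^2 : ℝ) : ℂ) = (((1-ε^2)/2 : ℝ):ℂ) := by
        calc ((‖a 1‖^2 : ℝ):ℂ) = ((Complex.normSq (a 1) : ℝ):ℂ) := by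
              rw [Complex.sq_norm]
          _ = a 1 * (starRingEnd ℂ) (a 1) := (Complex.mul_conj _).symm
          _ = ((1:ℂ)-(ε:ℂ)^2)/2 := hA
          _ = (((1-ε^2)/2:ℝ):ℂ) := by push_cast; ring
      exact_mod_cast hcast
    · have hcast : ((‖a 2‖^2 : ℝ) : ℂ) = (((1-ε^2)/2 : ℝ):ℂ) := by
        calc ((‖a 2‖^2 : ℝ):ℂ) = ((Complex.normSq (a 2) : ℝ):ℂ) := by
              rw [Complex.sq_norm]
          _ = a 2 * (starRingEnd ℂ) (a 2) := (Complex.mul_conj _).symm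
          _ = ((1:ℂ)-(ε:ℂ)^2)/2 := hB
          _ = (((1-ε^2)/2:ℝ):ℂ) := by push_cast; ring
      exact_mod_cast hcast
    · intro i h3 hik
      have hik' : i ≤ k := by omega
      have h := hS0
      rw [hS_def] at h
      simp only [Complex.mul_conj] at h
      have hsum0 : ∑ j ∈ Finset.Ico 2 k, Complex.normSq (a (j+1)) = 0 := by
        exact_mod_cast h
      have hall := (Finset.sum_eq_zero_iff_of_nonneg
        (fun j _ => Complex.normSq_nonneg _)).mp hsum0
      have hmem : i - 1 ∈ Finset.Ico 2 k := by
        rw [Finset.mem_Ico]; omega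
      have h0' := hall _ hmem
      rw [show i - 1 + 1 = i by omega] at h0'
      exact Complex.normSq_eq_zero.mp h0'
  · rintro ⟨ha1, ha2, ha0⟩
    rw [Complex.sq_norm] at ha1 ha2
    have hA : A = ((1:ℂ) - (ε:ℂ)^2)/2 := by
      rw [hA_def, Complex.mul_conj, ha1]; push_cast; ring
    have hB : B = ((1:ℂ) - (ε:ℂ)^2)/2 := by
      rw [hB_def, Complex.mul_conj, ha2]; push_cast; ring
    have hS0 : S = 0 := by
      rw [hS_def]
      refine Finset.sum_eq_zero fun i hi => ?_
      rw [Finset.mem_Ico] at hi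
      rw [ha0 (i+1) (by omega) (by omega)]
      simp
    intro lam
    set p : Polynomial ℂ :=
      (z.map (⇑Polynomial.C) - (Polynomial.X : Polynomial ℂ) • 1).det with hp
    set q : Polynomial ℂ := Polynomial.C ((-1:ℂ)^(k+1)) *
      ((Polynomial.X - 1)*(Polynomial.X+1)*Polynomial.X^(k-1)) with hq
    have heval : ∀ t : ℂ, Polynomial.eval t p = (z - t • 1).det := by
      intro t
      have h := RingHom.map_det (Polynomial.evalRingHom t)
        (z.map (⇑Polynomial.C) - (Polynomial.X : Polynomial ℂ) • 1)
      rw [RingHom.mapMatrix_apply] at h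
      have hmap : ((z.map (⇑Polynomial.C) - (Polynomial.X : Polynomial ℂ) • 1).map
          (⇑(Polynomial.evalRingHom t))) = z - t • 1 := by
        ext i j
        by_cases hij : i = j <;>
          simp [Matrix.map_apply, Matrix.sub_apply, Matrix.smul_apply, Matrix.one_apply, hij]
      rw [hmap] at h
      exact h
    have hqeval : ∀ t : ℂ, Polynomial.eval t q = (-1:ℂ)^(k+1) * ((t-1)*(t+1)*t^(k-1)) := by
      intro t; simp [hq]
    have hagree : ∀ t : ℂ, t ≠ 0 → t ≠ (ε:ℂ) → t ≠ -(ε:ℂ) →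
        Polynomial.eval t p = Polynomial.eval t q := by
      intro t ht0 ht1 ht2
      have hd1 : (ε:ℂ) - t ≠ 0 := sub_ne_zero.2 (Ne.symm ht1)
      have hd2 : -(ε:ℂ) - t ≠ 0 := by
        intro hh
        exact ht2 (by linear_combination -hh)
      rw [heval, hqeval, det_z k hk ε a z hz' t ht0 hd1 hd2,
        hA_def.symm.trans hA, hB_def.symm.trans hB, hS_def.symm.trans hS0]
      have e1 : ((-1:ℂ))^(k+1) = (-1)^(k-2) * (-1)^3 := by
        rw [← pow_add]; congr 1; omega
      have e2 : t^(k-1) = t^(k-2)*t := by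
        rw [← pow_succ]; congr 1; omega
      have e3 : (-t)^(k-2) = (-1:ℂ)^(k-2) * t^(k-2) := by
        rw [neg_pow]
      rw [e1, e2, e3]
      simp only [zero_div, add_zero]
      field_simp
      ring
    have hfin : ({(0:ℂ), (ε:ℂ), -(ε:ℂ)} : Set ℂ).Finite := Set.toFinite _
    have hpq : p = q := by
      refine Polynomial.eq_of_infinite_eval_eq p q (hfin.infinite_compl.mono ?_)
      intro x hx
      simp only [Set.mem_compl_iff, Set.mem_insert_iff, Set.mem_singleton_iff, not_or] at hx
      exact hagree x hx.1 hx.2.1 hx.2.2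
    have hfinal := heval lam
    rw [hpq, hqeval] at hfinal
    rw [hn2]
    exact hfinal.symm
end

section
/- A Hermitian n×n matrix H (n ≥ 2) that has a 2×2 principal submatrix equal to zero cannot have n−1 strictly positive eigenvalues, and cannot have n−1 strictly negative eigenvalues. -/
open Finset

open Matrix


lemma aux_quad (n : ℕ) (H : Matrix (Fin n) (Fin n) ℂ) (hH : H.IsHermitian)
    (i j : Fin n) (hij : i ≠ j)
    (h1 : H i i = 0) (h2 : H i j = 0) (h3 : H j i = 0) (h4 : H j j = 0)
    (s : ℝ) (k0 : Fin n)
    (hs : ∀ k, k ≠ k0 → 0 < s * hH.eigenvalues k) : False := by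
  set U : Matrix (Fin n) (Fin n) ℂ := (hH.eigenvectorUnitary : Matrix (Fin n) (Fin n) ℂ) with hU
  -- choose coefficients a b
  obtain ⟨a, b, hab, hker⟩ :
      ∃ a b : ℂ, ¬(a = 0 ∧ b = 0) ∧
        a * star (U i k0) + b * star (U j k0) = 0 := by
    by_cases hz : U i k0 = 0 ∧ U j k0 = 0
    · exact ⟨1, 0, by simp, by simp [hz.1, hz.2]⟩
    · refine ⟨star (U j k0), -star (U i k0), ?_, by ring⟩
      intro ⟨ha, hb⟩
      exact hz ⟨by simpa using hb, by simpa using ha⟩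
  set v : Fin n → ℂ := a • (Pi.single i (1:ℂ) : Fin n → ℂ) + b • (Pi.single j (1:ℂ) : Fin n → ℂ) with hv
  have hvq : star v ⬝ᵥ (H *ᵥ v) = 0 := by
    rw [hv]
    simp only [mulVec_add, mulVec_smul, star_add, star_smul, ← Pi.single_star, star_one,
      dotProduct_add, add_dotProduct, dotProduct_smul, smul_dotProduct, smul_eq_mul,
      mulVec_single, single_dotProduct, one_mul, mul_one]
    simp [h1, h2, h3, h4]
  set w : Fin n → ℂ := star U *ᵥ v with hw
  have hwk0 : w k0 = 0 := by
    rw [hw, hv]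
    simp only [mulVec_add, mulVec_smul, mulVec_single, Pi.add_apply, Pi.smul_apply,
      smul_eq_mul, mul_one]
    simp only [MulOpposite.op_one, one_smul]
    rw [show (star U).col i k0 = star (U i k0) from rfl, show (star U).col j k0 = star (U j k0) from rfl]
    exact hker
  have key : ∑ k, hH.eigenvalues k * Complex.normSq (w k) = 0 := by
    have hc : (↑(∑ k, hH.eigenvalues k * Complex.normSq (w k)) : ℂ) = star v ⬝ᵥ (H *ᵥ v) := by
      conv_rhs => rw [hH.spectral_theorem, Unitary.conjStarAlgAut_apply]
      rw [← mulVec_mulVec, ← mulVec_mulVec, dotProduct_mulVec, ← hU]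
      have hst : star v ᵥ* U = star w := by
        rw [hw, star_mulVec, star_eq_conjTranspose, conjTranspose_conjTranspose]
      rw [hst, ← hw]
      push_cast
      simp only [dotProduct, mulVec_diagonal, Pi.star_apply, Function.comp_apply]
      refine Finset.sum_congr rfl fun k _ => ?_
      rw [Complex.normSq_eq_conj_mul_self]
      rw [Complex.star_def]
      exact mul_left_comm _ _ _
    rw [hvq] at hc
    exact_mod_cast hc
  have hterm : ∀ k ∈ Finset.univ, 0 ≤ s * (hH.eigenvalues k * Complex.normSq (w k)) := by
    intro k _
    by_cases hk : k = k0
    · subst hk; rw [hwk0]; simp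
    · have := hs k hk
      have h0 : (0:ℝ) ≤ Complex.normSq (w k) := Complex.normSq_nonneg _
      calc (0:ℝ) ≤ (s * hH.eigenvalues k) * Complex.normSq (w k) := mul_nonneg this.le h0
        _ = s * (hH.eigenvalues k * Complex.normSq (w k)) := by ring
  have hsum0 : ∑ k, s * (hH.eigenvalues k * Complex.normSq (w k)) = 0 := by
    rw [← Finset.mul_sum, key, mul_zero]
  have hall := (Finset.sum_eq_zero_iff_of_nonneg hterm).mp hsum0
  have hw0 : w = 0 := by
    funext k
    by_cases hk : k = k0
    · subst hk; exact hwk0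
    · have h := hall k (Finset.mem_univ k)
      have hpos := hs k hk
      have : Complex.normSq (w k) = 0 := by
        by_contra hne
        have : s * (hH.eigenvalues k * Complex.normSq (w k)) ≠ 0 := by
          rw [← mul_assoc]
          exact mul_ne_zero (ne_of_gt hpos) hne
        exact this h
      exact Complex.normSq_eq_zero.mp this
  have hv0 : v = 0 := by
    have h1' : U *ᵥ w = v := by
      rw [hw, mulVec_mulVec, (Matrix.mem_unitaryGroup_iff).mp hH.eigenvectorUnitary.2,
        one_mulVec]
    rw [hw0, mulVec_zero] at h1'
    exact h1'.symm
  apply hab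
  constructor
  · have := congrFun hv0 i
    simpa [hv, Pi.single_apply, hij] using this
  · have := congrFun hv0 j
    simpa [hv, Pi.single_apply, hij.symm] using this

lemma exists_k0 {n : ℕ} (i : Fin n) (p : Fin n → Prop) [DecidablePred p]
    (hcard : n - 1 ≤ (Finset.univ.filter p).card) : ∃ k0, ∀ k, k ≠ k0 → p k := by
  haveI : Nonempty (Fin n) := ⟨i⟩
  have hn : 1 ≤ n := Fin.pos i
  have hsum : (Finset.univ.filter p).card + (Finset.univ.filter fun k => ¬ p k).card = n := by
    rw [Finset.card_filter_add_card_filter_not]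
    simp
  have hA : (Finset.univ.filter p).card ≤ n := by
    calc (Finset.univ.filter p).card ≤ Finset.univ.card := Finset.card_filter_le _ _
      _ = n := by simp
  have hB : (Finset.univ.filter fun k => ¬ p k).card ≤ 1 := by omega
  obtain ⟨x, hx⟩ := Finset.card_le_one_iff_subset_singleton.mp hB
  refine ⟨x, fun k hk => ?_⟩
  by_contra hpk
  have : k ∈ Finset.univ.filter fun k => ¬ p k := by simp [hpk]
  have := hx this
  simp at this
  exact hk this

/-- A Hermitian `n × n` matrix with a `2 × 2` principal submatrix equal to zero (indices
`i ≠ j` with `H i i = H i j = H j i = H j j = 0`) cannot have `n-1` strictly positive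
eigenvalues, and cannot have `n-1` strictly negative eigenvalues. -/
theorem hermitian_zero_principal_block_eigenvalue_bound
    (n : ℕ) (H : Matrix (Fin n) (Fin n) ℂ) (hH : H.IsHermitian)
    (i j : Fin n) (hij : i ≠ j)
    (h1 : H i i = 0) (h2 : H i j = 0) (h3 : H j i = 0) (h4 : H j j = 0) :
    ¬ (n - 1 ≤ (Finset.univ.filter fun l : Fin n => 0 < hH.eigenvalues l).card) ∧
    ¬ (n - 1 ≤ (Finset.univ.filter fun l : Fin n => hH.eigenvalues l < 0).card) := by
  constructor
  · intro hc
    obtain ⟨k0, hk0⟩ := exists_k0 i _ hc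
    exact aux_quad n H hH i j hij h1 h2 h3 h4 1 k0 (fun k hk => by simpa using hk0 k hk)
  · intro hc
    obtain ⟨k0, hk0⟩ := exists_k0 i _ hc
    refine aux_quad n H hH i j hij h1 h2 h3 h4 (-1) k0 (fun k hk => ?_)
    have := hk0 k hk
    nlinarith [this]
end

section
/- For λ₁, λ₂ ≥ 0 with λ₁² − λ₂² = 1 and any θ ∈ ℝ, the quantity β₊ − β₋, where β± = arg(λ₁ ± λ₂e^{−iθ}), lies in the open interval (−π/2, π/2); moreover every value in (−π/2, π/2) is attained for suitable λ₁, λ₂, θ. -/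
open Real

lemma aux_arg_sub {z w : ℂ} (hz : 0 < z.re) (hw : 0 < w.re) (hq : 0 < (z / w).re) :
    Complex.arg z - Complex.arg w ∈ Set.Ioo (-(π / 2)) (π / 2) := by
  have hz0 : z ≠ 0 := fun h => by simp [h] at hz
  have hw0 : w ≠ 0 := fun h => by simp [h] at hw
  have hza : |Complex.arg z| < π / 2 := Complex.abs_arg_lt_pi_div_two_iff.2 (Or.inl hz)
  have hwa : |Complex.arg w| < π / 2 := Complex.abs_arg_lt_pi_div_two_iff.2 (Or.inl hw)
  have hqa : |Complex.arg (z / w)| < π / 2 := Complex.abs_arg_lt_pi_div_two_iff.2 (Or.inl hq)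
  have h : ((Complex.arg (z / w) : ℝ) : Real.Angle) = ((Complex.arg z - Complex.arg w : ℝ) : Real.Angle) := by
    rw [Complex.arg_div_coe_angle hz0 hw0, Real.Angle.coe_sub]
  obtain ⟨k, hk⟩ := Real.Angle.angle_eq_iff_two_pi_dvd_sub.1 h
  have hpi := Real.pi_pos
  rcases abs_lt.1 hza with ⟨h1, h2'⟩
  rcases abs_lt.1 hwa with ⟨h3, h4⟩
  rcases abs_lt.1 hqa with ⟨h5, h6⟩
  have hk0 : k = 0 := by
    have habs : |(k : ℝ)| < 1 := by rw [abs_lt]; constructor <;> nlinarith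
    have : |k| < 1 := by exact_mod_cast habs
    exact Int.abs_lt_one_iff.mp this
  rw [hk0] at hk
  simp at hk
  constructor <;> nlinarith

lemma aux_part1 (l1 l2 θ : ℝ) (h1 : 0 ≤ l1) (h2 : 0 ≤ l2) (h : l1 ^ 2 - l2 ^ 2 = 1) :
    Complex.arg ((l1 : ℂ) + (l2 : ℂ) * Complex.exp (-(θ : ℂ) * Complex.I))
        - Complex.arg ((l1 : ℂ) - (l2 : ℂ) * Complex.exp (-(θ : ℂ) * Complex.I))
      ∈ Set.Ioo (-(π / 2)) (π / 2) := by
  set e := Complex.exp (-(θ : ℂ) * Complex.I) with he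
  have habs : ‖e‖ = 1 := by
    rw [he, Complex.norm_exp]
    simp
  have ha : e.re ^ 2 + e.im ^ 2 = 1 := by
    have h1' : Complex.normSq e = 1 := by
      rw [Complex.normSq_eq_norm_sq, habs]; norm_num
    rw [Complex.normSq_apply] at h1'
    nlinarith [h1']
  have hl1 : 1 ≤ l1 := by nlinarith
  have hll : l2 < l1 := by nlinarith
  have hre : |e.re| ≤ 1 := by
    have := Complex.abs_re_le_norm e
    rwa [habs] at this
  have hra := abs_le.1 hre
  set z := (l1 : ℂ) + (l2 : ℂ) * e with hzd
  set w := (l1 : ℂ) - (l2 : ℂ) * e with hwd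
  have hzre : z.re = l1 + l2 * e.re := by simp [hzd]
  have hzim : z.im = l2 * e.im := by simp [hzd]
  have hwre : w.re = l1 - l2 * e.re := by simp [hwd]
  have hwim : w.im = -(l2 * e.im) := by simp [hwd]
  have hz : 0 < z.re := by rw [hzre]; nlinarith [mul_le_mul_of_nonneg_left hra.1 h2]
  have hw : 0 < w.re := by rw [hwre]; nlinarith [mul_le_mul_of_nonneg_left hra.2 h2]
  have hw0 : w ≠ 0 := fun hh => by simp [hh] at hw
  have hns : 0 < Complex.normSq w := Complex.normSq_pos.2 hw0
  have hq : 0 < (z / w).re := by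
    rw [Complex.div_re]
    have hsum : z.re * w.re + z.im * w.im = 1 := by
      rw [hzre, hzim, hwre, hwim]
      linear_combination h - l2 ^ 2 * ha
    rw [← add_div, hsum]
    positivity
  exact aux_arg_sub hz hw hq

lemma aux_part2 (s : ℝ) (h0 : 0 ≤ s) (h1 : s < π / 4) :
    ∃ l1 l2 : ℝ, 0 ≤ l1 ∧ 0 ≤ l2 ∧ l1 ^ 2 - l2 ^ 2 = 1 ∧
      Complex.arg ((l1 : ℂ) + (l2 : ℂ) * Complex.I) = s ∧
      Complex.arg ((l1 : ℂ) - (l2 : ℂ) * Complex.I) = -s := by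
  have hpi := Real.pi_pos
  have hc : 0 < Real.cos (2 * s) :=
    Real.cos_pos_of_mem_Ioo ⟨by linarith, by linarith⟩
  have hcs : 0 < Real.cos s :=
    Real.cos_pos_of_mem_Ioo ⟨by linarith, by linarith⟩
  have hss : 0 ≤ Real.sin s := Real.sin_nonneg_of_nonneg_of_le_pi h0 (by linarith)
  set r : ℝ := 1 / Real.sqrt (Real.cos (2 * s)) with hrd
  have hr : 0 < r := by
    rw [hrd]
    positivity
  have hr2 : r ^ 2 = 1 / Real.cos (2 * s) := by
    rw [hrd, div_pow, one_pow, Real.sq_sqrt hc.le]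
  refine ⟨r * Real.cos s, r * Real.sin s, by positivity, by positivity, ?_, ?_, ?_⟩
  · have hcc : Real.cos s ^ 2 - Real.sin s ^ 2 = Real.cos (2 * s) := by
      rw [Real.cos_two_mul]
      nlinarith [Real.sin_sq_add_cos_sq s]
    have h3 : (r * Real.cos s) ^ 2 - (r * Real.sin s) ^ 2 = r ^ 2 * Real.cos (2 * s) := by
      rw [← hcc]; ring
    rw [h3, hr2]
    field_simp
  · have heq : ((r * Real.cos s : ℝ) : ℂ) + ((r * Real.sin s : ℝ) : ℂ) * Complex.I
        = (r : ℂ) * (Complex.cos s + Complex.sin s * Complex.I) := by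
      rw [← Complex.ofReal_cos, ← Complex.ofReal_sin]
      push_cast
      ring
    rw [heq]
    exact Complex.arg_mul_cos_add_sin_mul_I hr ⟨by linarith, by linarith⟩
  · have heq : ((r * Real.cos s : ℝ) : ℂ) - ((r * Real.sin s : ℝ) : ℂ) * Complex.I
        = (r : ℂ) * (Complex.cos (-s : ℝ) + Complex.sin (-s : ℝ) * Complex.I) := by
      rw [← Complex.ofReal_cos, ← Complex.ofReal_sin, Real.cos_neg, Real.sin_neg]
      push_cast
      ring
    rw [heq]
    exact Complex.arg_mul_cos_add_sin_mul_I hr ⟨by linarith, by linarith⟩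

/-- For `λ₁, λ₂ ≥ 0` with `λ₁² - λ₂² = 1` and any `θ`, the difference
`β₊ - β₋` of the principal arguments `β± = arg(λ₁ ± λ₂ e^{-iθ})` lies in `(-π/2, π/2)`;
moreover every value in `(-π/2, π/2)` is attained for suitable `λ₁, λ₂, θ`. -/
theorem arg_difference_range :
    (∀ l1 l2 θ : ℝ, 0 ≤ l1 → 0 ≤ l2 → l1 ^ 2 - l2 ^ 2 = 1 →
      Complex.arg ((l1 : ℂ) + (l2 : ℂ) * Complex.exp (-(θ : ℂ) * Complex.I))
          - Complex.arg ((l1 : ℂ) - (l2 : ℂ) * Complex.exp (-(θ : ℂ) * Complex.I))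
        ∈ Set.Ioo (-(π / 2)) (π / 2)) ∧
    (∀ x ∈ Set.Ioo (-(π / 2)) (π / 2), ∃ l1 l2 θ : ℝ,
      0 ≤ l1 ∧ 0 ≤ l2 ∧ l1 ^ 2 - l2 ^ 2 = 1 ∧
      Complex.arg ((l1 : ℂ) + (l2 : ℂ) * Complex.exp (-(θ : ℂ) * Complex.I))
          - Complex.arg ((l1 : ℂ) - (l2 : ℂ) * Complex.exp (-(θ : ℂ) * Complex.I)) = x) := by
  constructor
  · exact aux_part1
  · rintro x ⟨hx1, hx2⟩
    have hpi := Real.pi_pos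
    have hexp1 : Complex.exp (-(((-(π / 2) : ℝ)) : ℂ) * Complex.I) = Complex.I := by
      rw [show (-(((-(π / 2) : ℝ)) : ℂ) * Complex.I) = ((π / 2 : ℝ) : ℂ) * Complex.I by
          push_cast; ring,
        Complex.exp_mul_I, ← Complex.ofReal_cos, ← Complex.ofReal_sin,
        Real.cos_pi_div_two, Real.sin_pi_div_two]
      simp
    have hexp2 : Complex.exp (-(((π / 2 : ℝ)) : ℂ) * Complex.I) = -Complex.I := by
      rw [show (-(((π / 2 : ℝ)) : ℂ) * Complex.I) = ((-(π / 2) : ℝ) : ℂ) * Complex.I by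
          push_cast; ring,
        Complex.exp_mul_I, ← Complex.ofReal_cos, ← Complex.ofReal_sin,
        Real.cos_neg, Real.sin_neg, Real.cos_pi_div_two, Real.sin_pi_div_two]
      simp
    rcases le_or_gt 0 x with hx0 | hx0
    · obtain ⟨l1, l2, h1, h2, h3, h4, h5⟩ := aux_part2 (x / 2) (by linarith) (by linarith)
      refine ⟨l1, l2, -(π / 2), h1, h2, h3, ?_⟩
      rw [hexp1, h4, h5]
      ring
    · obtain ⟨l1, l2, h1, h2, h3, h4, h5⟩ := aux_part2 (-x / 2) (by linarith) (by linarith)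
      refine ⟨l1, l2, π / 2, h1, h2, h3, ?_⟩
      rw [hexp2]
      rw [show (l1 : ℂ) + (l2 : ℂ) * -Complex.I = (l1 : ℂ) - (l2 : ℂ) * Complex.I by ring,
        show (l1 : ℂ) - (l2 : ℂ) * -Complex.I = (l1 : ℂ) + (l2 : ℂ) * Complex.I by ring,
        h4, h5]
      ring
end
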